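/- If all initial amplitudes are equal, α_j(0) = 2^{-Q/2} for all j, then the success probability p(t) = Σ_{j<μ} |α_j(t)|² satisfies p(t) ≥ 1/(1 + 2^Q μ^{-1} e^{-2tΔ}) for all t ≥ 0. -/

import Mathlib

open Finset Real

theorem ite_combinatorial_success_probability
    (Q μ : ℕ) (hμ : μ < 2 ^ Q) (hμpos : 0 < μ)
    (lam : Fin (2 ^ Q) → ℝ) (hmono : Monotone lam)
    (hground : ∀ k : Fin (2 ^ Q), (k : ℕ) < μ → lam k = lam ⟨0, (Nat.pow_pos (by norm_num) : 0 < 2 ^ Q)⟩)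
    (Δ : ℝ) (hΔ : Δ = lam ⟨μ, hμ⟩ - lam ⟨0, (Nat.pow_pos (by norm_num) : 0 < 2 ^ Q)⟩) (hΔpos : 0 < Δ)
    (α0 : Fin (2 ^ Q) → ℂ)
    (hα0 : ∀ j, α0 j = ((2 : ℝ) ^ (-(Q : ℝ) / 2) : ℝ))
    (α : ℝ → Fin (2 ^ Q) → ℂ)
    (hα : ∀ t j, α t j =
      α0 j / (Real.sqrt (∑ k, ‖α0 k‖ ^ 2 * Real.exp (-2 * t * (lam k - lam j))) : ℂ))
    (p : ℝ → ℝ)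
    (hp : ∀ t, p t = ∑ j ∈ Finset.univ.filter fun j : Fin (2 ^ Q) => (j : ℕ) < μ, ‖α t j‖ ^ 2) :
    ∀ t ≥ (0 : ℝ), p t ≥ 1 / (1 + 2 ^ Q * (μ : ℝ)⁻¹ * Real.exp (-2 * t * Δ)) := by
  intro t ht
  set z : Fin (2 ^ Q) := ⟨0, (Nat.pow_pos (by norm_num) : 0 < 2 ^ Q)⟩ with hz
  set E : ℝ := Real.exp (-2 * t * Δ) with hE
  have hEpos : 0 < E := Real.exp_pos _
  -- norm of initial amplitudes
  have hnorm0 : ∀ k, ‖α0 k‖ ^ 2 = ((2 : ℝ) ^ Q)⁻¹ := by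
    intro k
    rw [hα0, Complex.norm_real, Real.norm_eq_abs]
    have h2 : (0:ℝ) ≤ (2 : ℝ) ^ (-(Q : ℝ) / 2) := Real.rpow_nonneg (by norm_num) _
    rw [abs_of_nonneg h2, ← Real.rpow_natCast ((2:ℝ) ^ (-(Q : ℝ) / 2)) 2,
      ← Real.rpow_mul (by norm_num)]
    rw [show -(Q : ℝ) / 2 * (2:ℕ) = -(Q:ℝ) by push_cast; ring]
    rw [Real.rpow_neg (by norm_num), Real.rpow_natCast]
  -- T j
  set T : Fin (2 ^ Q) → ℝ := fun j => ∑ k, Real.exp (-2 * t * (lam k - lam j)) with hT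
  have hTpos : ∀ j, 0 < T j := fun j =>
    Finset.sum_pos (fun k _ => Real.exp_pos _) Finset.univ_nonempty
  have hnorm : ∀ j, ‖α t j‖ ^ 2 = (T j)⁻¹ := by
    intro j
    have hS : ∑ k, ‖α0 k‖ ^ 2 * Real.exp (-2 * t * (lam k - lam j))
        = ((2 : ℝ) ^ Q)⁻¹ * T j := by
      simp only [hT, Finset.mul_sum]
      exact Finset.sum_congr rfl fun k _ => by rw [hnorm0]
    have hSpos : 0 < ((2 : ℝ) ^ Q)⁻¹ * T j := by positivity
    rw [hα, hS, norm_div, Complex.norm_real, Real.norm_eq_abs, abs_of_nonneg (Real.sqrt_nonneg _),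
      div_pow, Real.sq_sqrt hSpos.le, hnorm0]
    rw [div_eq_iff (by positivity)]
    field_simp
    rw [div_self (hTpos j).ne']
  -- the filter set and its cardinality
  have hfilter : (Finset.univ.filter fun j : Fin (2 ^ Q) => (j : ℕ) < μ)
      = Finset.Iio ⟨μ, hμ⟩ := by
    ext j; simp [Fin.lt_def]
  have hcard : (Finset.univ.filter fun j : Fin (2 ^ Q) => (j : ℕ) < μ).card = μ := by
    rw [hfilter, Fin.card_Iio]
  -- for j < μ, T j = T z
  have hTj : ∀ j : Fin (2 ^ Q), (j : ℕ) < μ → T j = T z := by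
    intro j hj
    simp only [hT, hground j hj]
  -- p t = μ / T z
  have hpt : p t = (μ : ℝ) * (T z)⁻¹ := by
    rw [hp]
    rw [Finset.sum_congr rfl (fun j hj => by
      rw [hnorm, hTj j (by simpa using Finset.mem_filter.mp hj)])]
    rw [Finset.sum_const, hcard, nsmul_eq_mul]
  -- bound on T z
  have hTbound : T z ≤ (μ : ℝ) + 2 ^ Q * E := by
    simp only [hT]
    rw [← Finset.sum_filter_add_sum_filter_not Finset.univ
      (fun k : Fin (2 ^ Q) => (k : ℕ) < μ)]
    gcongr ?_ + ?_
    · have : ∀ k ∈ Finset.univ.filter fun k : Fin (2 ^ Q) => (k : ℕ) < μ,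
          Real.exp (-2 * t * (lam k - lam z)) = 1 := by
        intro k hk
        rw [hground k (by simpa using Finset.mem_filter.mp hk), sub_self, mul_zero,
          Real.exp_zero]
      rw [Finset.sum_congr rfl this, Finset.sum_const, hcard, nsmul_eq_mul, mul_one]
    · calc ∑ k ∈ Finset.univ.filter fun k : Fin (2 ^ Q) => ¬(k : ℕ) < μ,
            Real.exp (-2 * t * (lam k - lam z))
          ≤ ∑ _k ∈ Finset.univ.filter fun k : Fin (2 ^ Q) => ¬(k : ℕ) < μ, E := by
            apply Finset.sum_le_sum
            intro k hk
            have hkμ : μ ≤ (k : ℕ) := le_of_not_gt (by simpa using Finset.mem_filter.mp hk)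
            have hlam : Δ ≤ lam k - lam z := by
              rw [hΔ]
              have := hmono (show (⟨μ, hμ⟩ : Fin (2 ^ Q)) ≤ k from hkμ)
              linarith
            apply Real.exp_le_exp.mpr
            nlinarith
        _ ≤ 2 ^ Q * E := by
            rw [Finset.sum_const, nsmul_eq_mul]
            gcongr
            calc ((Finset.univ.filter fun k : Fin (2 ^ Q) => ¬(k : ℕ) < μ).card : ℝ)
                ≤ (Finset.univ : Finset (Fin (2 ^ Q))).card := by
                  exact_mod_cast Finset.card_filter_le _ _
              _ = 2 ^ Q := by simp
  -- conclude
  have hμR : (0:ℝ) < μ := by exact_mod_cast hμpos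
  rw [hpt, ge_iff_le]
  have hRHS : 1 / (1 + 2 ^ Q * (μ : ℝ)⁻¹ * E) = (μ : ℝ) / ((μ : ℝ) + 2 ^ Q * E) := by
    rw [div_eq_div_iff (by positivity) (by positivity)]
    field_simp
  rw [hRHS, div_eq_mul_inv]
  gcongr
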